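/- For every α > 0 and all points x, y, c in three-dimensional Euclidean space, the series indexed by multi-indices n = (n₁, n₂, n₃) ∈ ℕ³ with term (1/n!) · ((y − c)/√α)ⁿ · h_n((x − c)/√α) converges (in the sense of unconditional summability over ℕ³) and its sum equals exp(−‖y − x‖²/α). (This is the three-dimensional tensor-product Hermite expansion used in the Multipole-to-Multipole (M2M) step of the Fast Gauss Transform.) -/

import Mathlib

open Real

/-- The Hermite function `h_n(t) = (−1)ⁿ · (dⁿ/dtⁿ) exp(−t²)`. -/
noncomputable def hermiteFun (n : ℕ) (t : ℝ) : ℝ :=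
  (-1) ^ n * iteratedDeriv n (fun s : ℝ => Real.exp (-s ^ 2)) t





/-- Physicists' Hermite-type polynomials for `exp (-t^2)`. -/
noncomputable def gaussP : ℕ → Polynomial ℝ
  | 0 => 1
  | n + 1 => Polynomial.derivative (gaussP n) - Polynomial.C 2 * Polynomial.X * gaussP n

lemma gauss_iteratedDeriv {K : Type} [NontriviallyNormedField K] [Algebra ℝ K]
    (E : K → K) (hE : ∀ z, HasDerivAt E ((-2 * z) * E z) z) (n : ℕ) (z : K) :
    iteratedDeriv n E z = Polynomial.aeval z (gaussP n) * E z := by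
  induction n generalizing z with
  | zero => simp [gaussP]
  | succ n ih =>
    have hfun : iteratedDeriv n E = fun w => Polynomial.aeval w (gaussP n) * E w := funext ih
    rw [iteratedDeriv_succ, hfun]
    have h1 : HasDerivAt (fun w => Polynomial.aeval w (gaussP n) * E w)
        (Polynomial.aeval z (Polynomial.derivative (gaussP n)) * E z +
          Polynomial.aeval z (gaussP n) * ((-2 * z) * E z)) z :=
      ((gaussP n).hasDerivAt_aeval z).mul (hE z)
    rw [h1.deriv]
    simp only [gaussP, map_sub, map_mul, Polynomial.aeval_X, Polynomial.aeval_C, map_ofNat]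
    ring

lemma hasDerivAt_gaussR (z : ℝ) :
    HasDerivAt (fun t : ℝ => Real.exp (-t ^ 2)) ((-2 * z) * Real.exp (-z ^ 2)) z := by
  have h1 : HasDerivAt (fun t : ℝ => -t ^ 2) (-(2 * z ^ 1)) z := (hasDerivAt_pow 2 z).neg
  have := (Real.hasDerivAt_exp (-z ^ 2)).comp z (by simpa using h1)
  exact this.congr_deriv (by ring)

lemma hasDerivAt_gaussC (z : ℂ) :
    HasDerivAt (fun t : ℂ => Complex.exp (-t ^ 2)) ((-2 * z) * Complex.exp (-z ^ 2)) z := by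
  have h1 : HasDerivAt (fun t : ℂ => -t ^ 2) (-(2 * z ^ 1)) z := (hasDerivAt_pow 2 z).neg
  have := (Complex.hasDerivAt_exp (-z ^ 2)).comp z (by simpa using h1)
  exact this.congr_deriv (by ring)

lemma hermiteFun_eq (n : ℕ) (s : ℝ) :
    hermiteFun n s = (-1) ^ n * (Polynomial.aeval s (gaussP n) * Real.exp (-s ^ 2)) := by
  rw [hermiteFun, gauss_iteratedDeriv _ hasDerivAt_gaussR]

lemma coeff_eq (s : ℝ) (n : ℕ) :
    iteratedDeriv n (fun z : ℂ => Complex.exp (-((s : ℂ) - z) ^ 2)) 0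
      = ((hermiteFun n s : ℝ) : ℂ) := by
  have h1 : (fun z : ℂ => Complex.exp (-((s : ℂ) - z) ^ 2))
      = fun z => (fun w : ℂ => Complex.exp (-((s : ℂ) + w) ^ 2)) (-z) := by
    funext z; ring_nf
  rw [h1, iteratedDeriv_comp_neg n (fun w : ℂ => Complex.exp (-((s : ℂ) + w) ^ 2)) 0,
    show (fun w : ℂ => Complex.exp (-((s : ℂ) + w) ^ 2))
      = fun w => (fun u : ℂ => Complex.exp (-u ^ 2)) ((s : ℂ) + w) from rfl,
    iteratedDeriv_comp_const_add n (fun u : ℂ => Complex.exp (-u ^ 2)) (s : ℂ)]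
  simp only [neg_zero, add_zero]
  rw [gauss_iteratedDeriv _ hasDerivAt_gaussC, hermiteFun_eq, smul_eq_mul]
  have h2 := Polynomial.aeval_algHom_apply Complex.ofRealAm s (gaussP n)
  simp only [Complex.ofRealAm_coe] at h2
  rw [h2]
  push_cast
  ring

lemma oneDim (s t : ℝ) :
    HasSum (fun n : ℕ => 1 / (n.factorial : ℝ) * t ^ n * hermiteFun n s)
      (Real.exp (-(s - t) ^ 2)) := by
  have hF : Differentiable ℂ (fun z : ℂ => Complex.exp (-((s : ℂ) - z) ^ 2)) := by
    apply Complex.differentiable_exp.comp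
    exact (((differentiable_const _).sub differentiable_id).pow 2).neg
  have H := Complex.hasSum_taylorSeries_of_entire hF (c := 0) (z := (t : ℂ))
  have H' : HasSum (fun n : ℕ => ((1 / (n.factorial : ℝ) * t ^ n * hermiteFun n s : ℝ) : ℂ))
      ((Real.exp (-(s - t) ^ 2) : ℝ) : ℂ) := by
    convert H using 2 with n
    · rfl
    · rw [coeff_eq, smul_eq_mul, smul_eq_mul]
      push_cast
      ring
    · push_cast
      ring_nf
  exact Complex.hasSum_ofReal.mp H'

lemma triple_hasSum {f g h : ℕ → ℝ} {a b c : ℝ}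
    (hf : HasSum f a) (hg : HasSum g b) (hh : HasSum h c) :
    HasSum (fun n : Fin 3 → ℕ => f (n 0) * g (n 1) * h (n 2)) (a * b * c) := by
  have nf : Summable fun k => ‖f k‖ := summable_norm_iff.mpr hf.summable
  have ng : Summable fun k => ‖g k‖ := summable_norm_iff.mpr hg.summable
  have nh : Summable fun k => ‖h k‖ := summable_norm_iff.mpr hh.summable
  have n12 : Summable fun p : ℕ × ℕ => ‖f p.1 * g p.2‖ := nf.mul_norm ng
  have h12 : HasSum (fun p : ℕ × ℕ => f p.1 * g p.2) (a * b) :=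
    hf.mul hg n12.of_norm
  have h123 : HasSum (fun p : (ℕ × ℕ) × ℕ => f p.1.1 * g p.1.2 * h p.2) (a * b * c) :=
    h12.mul hh (n12.mul_norm nh).of_norm
  let e : (Fin 3 → ℕ) ≃ (ℕ × ℕ) × ℕ :=
    { toFun := fun n => ((n 0, n 1), n 2)
      invFun := fun p => ![p.1.1, p.1.2, p.2]
      left_inv := by intro n; funext i; fin_cases i <;> simp
      right_inv := by intro p; simp }
  exact (e.hasSum_iff).mpr h123

/-- **Three-dimensional tensor-product Hermite expansion (M2M step of the FGT).**
For `α > 0` and `x, y, c ∈ ℝ³`, the family indexed by multi-indices `n ∈ ℕ³` with term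
`(1/n!)·((y−c)/√α)ⁿ·h_n((x−c)/√α)` is unconditionally summable with sum
`exp(−‖y−x‖²/α)`, where `n! = n₁!n₂!n₃!`, `rⁿ = ∏ rᵢ^{nᵢ}`, `h_n(r) = ∏ h_{nᵢ}(rᵢ)`. -/
theorem hermite_expansion_m2m_3d (α : ℝ) (hα : 0 < α)
    (x y c : EuclideanSpace ℝ (Fin 3)) :
    HasSum (fun n : Fin 3 → ℕ =>
        (1 / ∏ i, ((n i).factorial : ℝ)) *
          (∏ i, ((y i - c i) / Real.sqrt α) ^ (n i)) *
          (∏ i, hermiteFun (n i) ((x i - c i) / Real.sqrt α)))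
      (Real.exp (-‖y - x‖ ^ 2 / α)) := by
  have hs : Real.sqrt α ^ 2 = α := Real.sq_sqrt hα.le
  have hs0 : Real.sqrt α ≠ 0 := by positivity
  have key := triple_hasSum
    (oneDim ((x 0 - c 0) / Real.sqrt α) ((y 0 - c 0) / Real.sqrt α))
    (oneDim ((x 1 - c 1) / Real.sqrt α) ((y 1 - c 1) / Real.sqrt α))
    (oneDim ((x 2 - c 2) / Real.sqrt α) ((y 2 - c 2) / Real.sqrt α))
  have hnorm : ‖y - x‖ ^ 2 = (y 0 - x 0) ^ 2 + (y 1 - x 1) ^ 2 + (y 2 - x 2) ^ 2 := by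
    rw [EuclideanSpace.norm_eq, Real.sq_sqrt (by positivity)]
    simp [Fin.sum_univ_three, sq_abs]
  have hsum : Real.exp (-((x 0 - c 0) / Real.sqrt α - (y 0 - c 0) / Real.sqrt α) ^ 2) *
      Real.exp (-((x 1 - c 1) / Real.sqrt α - (y 1 - c 1) / Real.sqrt α) ^ 2) *
      Real.exp (-((x 2 - c 2) / Real.sqrt α - (y 2 - c 2) / Real.sqrt α) ^ 2)
      = Real.exp (-‖y - x‖ ^ 2 / α) := by
    rw [← Real.exp_add, ← Real.exp_add, hnorm]
    congr 1
    field_simp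
    rw [hs]
    ring
  rw [← hsum]
  convert key using 2 with n
  simp only [Fin.prod_univ_three]
  ring
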